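/- Let ξ_{n,i} be defined by ξ_{0,0} = 1, ξ_{0,i} = 0 for i ≠ 0, and ξ_{n+1,i} = (1+2n−6i)·ξ_{n,i} + (n−2i+2)·ξ_{n,i−1} − 4(i+1)·ξ_{n,i+1}, and set ξ_n(x) = Σ_{i=0}^{⌊n/2⌋} ξ_{n,i} x^i. Then for every n ≥ 0 and every real x, ξ_n(x−2) = Σ_{π ∈ S_n} x^{lpk(π)}, the sum over all permutations π of {1,…,n}. In particular, ξ_{n,i} is a positive integer for all 0 ≤ i ≤ ⌊n/2⌋. -/

import Mathlib

open Finset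

/-- Signed permutations of order `n` (the hyperoctahedral group), modeled as a
permutation of `Fin n` together with a sign for each position. -/
abbrev BSigned (n : ℕ) := Equiv.Perm (Fin n) × (Fin n → Bool)

/-- The word of a signed permutation: `bword σ j = σ(j)` for `1 ≤ j ≤ n`,
with the convention `σ(0) = 0`. -/
def bword {n : ℕ} (σ : BSigned n) (j : ℕ) : ℤ :=
  if h : 1 ≤ j ∧ j ≤ n then
    (if σ.2 ⟨j - 1, by omega⟩ then -1 else 1) * ((σ.1 ⟨j - 1, by omega⟩ : ℕ) + 1)
  else 0

/-- The number of alternating descents of a signed permutation: the number of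
`0 ≤ j ≤ n-1` such that `j` is even and `σ(j) < σ(j+1)`, or `j` is odd and `σ(j) > σ(j+1)`. -/
def altdesB {n : ℕ} (σ : BSigned n) : ℕ :=
  ((Finset.range n).filter (fun j => (Even j ∧ bword σ j < bword σ (j + 1)) ∨
      (Odd j ∧ bword σ (j + 1) < bword σ j))).card

/-- The type B alternating Eulerian number `B̂(n,k)`. -/
def Bhat (n k : ℕ) : ℕ :=
  (Finset.univ.filter (fun σ : BSigned n => altdesB σ = k)).card

/-- The type B alternating Eulerian polynomial `B̂_n(x)` as a real function. -/
noncomputable def Bpoly (n : ℕ) (x : ℝ) : ℝ :=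
  ∑ σ : BSigned n, x ^ altdesB σ

/-- The word of a permutation of `{1,…,n}`: `aword π j = π(j)` for `1 ≤ j ≤ n`,
with the convention `π(0) = 0`. -/
def aword {n : ℕ} (π : Equiv.Perm (Fin n)) (j : ℕ) : ℕ :=
  if h : 1 ≤ j ∧ j ≤ n then (π ⟨j - 1, by omega⟩ : ℕ) + 1 else 0

/-- The number of alternating descents of a permutation: the number of
`1 ≤ j ≤ n-1` such that `j` is odd and `π(j) > π(j+1)`, or `j` is even and `π(j) < π(j+1)`. -/
def altdesA {n : ℕ} (π : Equiv.Perm (Fin n)) : ℕ :=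
  ((Finset.Icc 1 (n - 1)).filter (fun j => (Odd j ∧ aword π (j + 1) < aword π j) ∨
      (Even j ∧ aword π j < aword π (j + 1)))).card

/-- The type A alternating Eulerian number `Â(n,k)`. -/
def Ahat (n k : ℕ) : ℕ :=
  (Finset.univ.filter (fun π : Equiv.Perm (Fin n) => altdesA π = k)).card

/-- The type A alternating Eulerian polynomial `Â_n(x)` as a real function. -/
noncomputable def Apoly (n : ℕ) (x : ℝ) : ℝ :=
  ∑ π : Equiv.Perm (Fin n), x ^ altdesA π

/-- The number of left peaks of a permutation: indices `1 ≤ i ≤ n-1` with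
`π(i-1) < π(i) > π(i+1)`, where `π(0) = 0`. -/
def lpk {n : ℕ} (π : Equiv.Perm (Fin n)) : ℕ :=
  ((Finset.Icc 1 (n - 1)).filter (fun i =>
      aword π (i - 1) < aword π i ∧ aword π (i + 1) < aword π i)).card

/-- `M n k` is the number of permutations of `{1,…,n}` with exactly `k` left peaks. -/
def M (n k : ℕ) : ℕ :=
  (Finset.univ.filter (fun π : Equiv.Perm (Fin n) => lpk π = k)).card

/-- The derivative polynomials for secant: `Q 0 = 1`,
`Q (n+1) = x Q n + (1+x²) (Q n)'`. -/
noncomputable def Q : ℕ → Polynomial ℝ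
  | 0 => 1
  | n + 1 => Polynomial.X * Q n + (1 + Polynomial.X ^ 2) * Polynomial.derivative (Q n)

/-- The coefficients `ξ_{n,i}` (terms with negative index vanish). -/
def xi : ℕ → ℤ → ℤ
  | 0, i => if i = 0 then 1 else 0
  | n + 1, i => (1 + 2 * (n : ℤ) - 6 * i) * xi n i + ((n : ℤ) - 2 * i + 2) * xi n (i - 1)
      - 4 * (i + 1) * xi n (i + 1)

/-- The polynomial `ξ_n(x) = Σ_{i=0}^{⌊n/2⌋} ξ_{n,i} x^i` as a real function. -/
noncomputable def xiPoly (n : ℕ) (x : ℝ) : ℝ :=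
  ∑ i ∈ Finset.range (n / 2 + 1), (xi n i : ℝ) * x ^ i

/-- A snake: a signed permutation with `σ(0) < σ(1) > σ(2) < σ(3) > ⋯`. -/
def IsSnake {n : ℕ} (σ : BSigned n) : Prop :=
  ∀ i : ℕ, (2 * i + 1 ≤ n → bword σ (2 * i) < bword σ (2 * i + 1)) ∧
    (2 * i + 2 ≤ n → bword σ (2 * i + 2) < bword σ (2 * i + 1))

/-- The Springer number `s_n`: the number of snakes of order `n`. -/
noncomputable def springer (n : ℕ) : ℕ := Nat.card {σ : BSigned n // IsSnake σ}

/-- An alternating (down-up) permutation: `π(1) > π(2) < π(3) > ⋯`. -/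
def IsAlternating {m : ℕ} (π : Equiv.Perm (Fin m)) : Prop :=
  ∀ j : ℕ, 1 ≤ j → j + 1 ≤ m →
    (Odd j → aword π (j + 1) < aword π j) ∧ (Even j → aword π j < aword π (j + 1))

/-- The secant number `E_{2n}`: the number of alternating permutations of `{1,…,2n}`. -/
noncomputable def secantNumber (n : ℕ) : ℕ :=
  Nat.card {π : Equiv.Perm (Fin (2 * n)) // IsAlternating π}

namespace Pf
open Finset

variable {n : ℕ}

def PkSet (π : Equiv.Perm (Fin n)) : Finset ℕ :=
  (Finset.Icc 1 (n - 1)).filter (fun i =>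
      aword π (i - 1) < aword π i ∧ aword π (i + 1) < aword π i)

lemma lpk_eq (π : Equiv.Perm (Fin n)) : lpk π = (PkSet π).card := rfl

lemma aword_le (π : Equiv.Perm (Fin n)) (j : ℕ) : aword π j ≤ n := by
  unfold aword; split
  · have := (π ⟨j - 1, by omega⟩).isLt; omega
  · omega

lemma mem_PkSet_bounds {π : Equiv.Perm (Fin n)} {i : ℕ} (h : i ∈ PkSet π) :
    1 ≤ i ∧ i ≤ n - 1 := by
  simp only [PkSet, mem_filter, mem_Icc] at h; exact h.1

lemma nonadj {π : Equiv.Perm (Fin n)} {i : ℕ} (h : i ∈ PkSet π) : i + 1 ∉ PkSet π := by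
  intro h2
  simp only [PkSet, mem_filter, mem_Icc, Nat.add_sub_cancel] at h h2
  omega

lemma lpk_le (π : Equiv.Perm (Fin n)) : lpk π ≤ n / 2 := by
  rw [lpk_eq]
  have h1 : (PkSet π).card ≤ (Finset.Icc 1 (n / 2)).card := by
    apply Finset.card_le_card_of_injOn (fun i => (i + 1) / 2)
    · intro i hi
      have := mem_PkSet_bounds hi
      simp only [Finset.mem_coe, mem_Icc]
      omega
    · intro a ha b hb hab
      by_contra hne
      have hab' : (a + 1) / 2 = (b + 1) / 2 := hab
      rcases Nat.lt_or_ge a b with h | h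
      · have hb1 : b = a + 1 := by omega
        exact nonadj ha (hb1 ▸ hb)
      · have ha1 : a = b + 1 := by omega
        exact nonadj hb (ha1 ▸ ha)
  simpa using h1

end Pf
namespace Pf
open Finset
variable {n : ℕ}

def ins (p : Fin (n + 1)) (π : Equiv.Perm (Fin n)) : Equiv.Perm (Fin (n + 1)) :=
  (finSuccEquiv' p).trans ((Equiv.optionCongr π).trans (finSuccEquiv' (Fin.last n)).symm)

lemma ins_at (p : Fin (n + 1)) (π : Equiv.Perm (Fin n)) : ins p π p = Fin.last n := by
  simp [ins, finSuccEquiv'_at, finSuccEquiv'_symm_none]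

lemma ins_succAbove (p : Fin (n + 1)) (π : Equiv.Perm (Fin n)) (j : Fin n) :
    ins p π (p.succAbove j) = (π j).castSucc := by
  simp [ins, finSuccEquiv'_succAbove, finSuccEquiv'_symm_some, Fin.succAbove_last]

lemma aword_ins (p : Fin (n + 1)) (π : Equiv.Perm (Fin n)) (j : ℕ) :
    aword (ins p π) j = if j ≤ (p : ℕ) then aword π j
      else if j = (p : ℕ) + 1 then n + 1 else aword π (j - 1) := by
  have hp := p.isLt
  rcases le_or_gt j (p : ℕ) with h | h
  · rw [if_pos h]
    rcases Nat.eq_zero_or_pos j with rfl | hj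
    · simp [aword]
    · -- 1 ≤ j ≤ p ≤ n
      have hjn : j ≤ n := by omega
      have hj1 : j - 1 < n := by omega
      have key : (⟨j - 1, by omega⟩ : Fin (n + 1)) = p.succAbove ⟨j - 1, hj1⟩ := by
        rw [Fin.succAbove_of_castSucc_lt]
        · rfl
        · simp [Fin.lt_def]; omega
      unfold aword
      rw [dif_pos ⟨hj, by omega⟩, dif_pos ⟨hj, hjn⟩, key, ins_succAbove]
      simp
  · rw [if_neg (by omega)]
    rcases Nat.decEq j ((p : ℕ) + 1) with hne | rfl
    · rw [if_neg hne]
      rcases le_or_gt j (n + 1) with hjn | hjn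
      · -- p+2 ≤ j ≤ n+1
        have hj2 : j - 2 < n := by omega
        have key : (⟨j - 1, by omega⟩ : Fin (n + 1)) = p.succAbove ⟨j - 2, hj2⟩ := by
          rw [Fin.succAbove_of_le_castSucc]
          · simp [Fin.succ]; omega
          · simp [Fin.le_def]; omega
        unfold aword
        rw [dif_pos ⟨by omega, hjn⟩, dif_pos ⟨by omega, by omega⟩, key, ins_succAbove]
        simp only [Fin.coe_castSucc]
        congr 2 <;> omega
      · unfold aword
        rw [dif_neg (by omega), dif_neg (by omega)]
    · rw [if_pos rfl]
      have key : (⟨(p : ℕ) + 1 - 1, by omega⟩ : Fin (n + 1)) = p := by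
        apply Fin.ext; simp
      unfold aword
      rw [dif_pos ⟨by omega, by omega⟩, key, ins_at]
      simp

lemma ins_injective :
    Function.Injective (fun pq : Fin (n + 1) × Equiv.Perm (Fin n) => ins pq.1 pq.2) := by
  rintro ⟨p, π⟩ ⟨q, τ⟩ h
  simp only at h
  have hpq : p = q := by
    have h1 : ins q τ p = Fin.last n := by rw [← h]; exact ins_at p π
    have h2 : ins q τ q = Fin.last n := ins_at q τ
    exact (ins q τ).injective (h1.trans h2.symm)
  subst hpq
  have hπ : π = τ := by
    apply Equiv.ext; intro j
    have h1 : ins p π (p.succAbove j) = ins p τ (p.succAbove j) := by rw [h]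
    rw [ins_succAbove, ins_succAbove] at h1
    exact Fin.castSucc_injective n h1
  rw [hπ]

lemma ins_bijective :
    Function.Bijective (fun pq : Fin (n + 1) × Equiv.Perm (Fin n) => ins pq.1 pq.2) := by
  rw [Fintype.bijective_iff_injective_and_card]
  refine ⟨ins_injective, ?_⟩
  simp [Fintype.card_perm, Nat.factorial_succ]

end Pf
namespace Pf
open Finset
variable {n : ℕ}

lemma mem_PkSet_ins (p : Fin (n + 1)) (π : Equiv.Perm (Fin n)) (i : ℕ) :
    i ∈ PkSet (ins p π) ↔
      (i < (p : ℕ) ∧ i ∈ PkSet π) ∨ (i = (p : ℕ) + 1 ∧ (p : ℕ) < n) ∨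
      ((p : ℕ) + 3 ≤ i ∧ i ≤ n ∧ i - 1 ∈ PkSet π) := by
  have hp := p.isLt
  have bi : ∀ j, aword π j ≤ n := aword_le π
  constructor
  · intro h
    simp only [PkSet, mem_filter, mem_Icc, Nat.add_sub_cancel] at h
    obtain ⟨⟨hi1, hi2⟩, h1, h2⟩ := h
    simp only [aword_ins, Nat.add_sub_cancel] at h1 h2
    rcases lt_trichotomy i (p : ℕ) with hc | hc | hc
    · left
      rw [if_pos (by omega), if_pos (by omega)] at h1
      rw [if_pos (by omega), if_pos (by omega)] at h2
      refine ⟨hc, ?_⟩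
      simp only [PkSet, mem_filter, mem_Icc]
      exact ⟨⟨hi1, by omega⟩, h1, h2⟩
    · exfalso
      rw [if_neg (by omega), if_pos (by omega), if_pos (by omega)] at h2
      have := bi i; omega
    · rcases Nat.lt_or_ge i ((p : ℕ) + 2) with hc2 | hc2
      · right; left
        exact ⟨by omega, by omega⟩
      · rcases Nat.lt_or_ge i ((p : ℕ) + 3) with hc3 | hc3
        · exfalso
          rw [if_neg (by omega), if_pos (by omega), if_neg (by omega),
            if_neg (by omega)] at h1
          have := bi (i - 1); omega
        · right; right
          rw [if_neg (by omega), if_neg (by omega), if_neg (by omega),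
            if_neg (by omega)] at h1
          rw [if_neg (by omega), if_neg (by omega), if_neg (by omega),
            if_neg (by omega)] at h2
          refine ⟨hc3, by omega, ?_⟩
          simp only [PkSet, mem_filter, mem_Icc]
          have e1 : i - 1 + 1 = i := by omega
          rw [e1]
          exact ⟨⟨by omega, by omega⟩, h1, h2⟩
  · intro h
    simp only [PkSet, mem_filter, mem_Icc, Nat.add_sub_cancel]
    rcases h with ⟨hc, hm⟩ | ⟨hc, hcn⟩ | ⟨hc, hin, hm⟩
    · simp only [PkSet, mem_filter, mem_Icc] at hm
      obtain ⟨⟨hi1, hi2⟩, h1, h2⟩ := hm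
      refine ⟨⟨hi1, by omega⟩, ?_, ?_⟩
      · simp only [aword_ins]
        rw [if_pos (by omega), if_pos (by omega)]; exact h1
      · simp only [aword_ins]
        rw [if_pos (by omega), if_pos (by omega)]; exact h2
    · subst hc
      refine ⟨⟨by omega, by omega⟩, ?_, ?_⟩
      · simp only [aword_ins, Nat.add_sub_cancel]
        rw [if_pos (by omega), if_neg (by omega), if_pos trivial]
        have := bi (p : ℕ); omega
      · simp only [aword_ins, Nat.add_sub_cancel]
        rw [if_neg (by omega), if_neg (by omega), if_neg (by omega), if_pos trivial]
        have := bi ((p : ℕ) + 1); omega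
    · simp only [PkSet, mem_filter, mem_Icc] at hm
      obtain ⟨⟨hi1, hi2⟩, h1, h2⟩ := hm
      refine ⟨⟨by omega, by omega⟩, ?_, ?_⟩
      · simp only [aword_ins]
        rw [if_neg (by omega), if_neg (by omega), if_neg (by omega),
          if_neg (by omega)]
        exact h1
      · simp only [aword_ins, Nat.add_sub_cancel]
        rw [if_neg (by omega), if_neg (by omega), if_neg (by omega),
          if_neg (by omega)]
        have e1 : i - 1 + 1 = i := by omega
        rw [e1] at h2
        exact h2

end Pf
namespace Pf
open Finset
variable {n : ℕ}

lemma PkSet_ins_eq (p : Fin (n + 1)) (π : Equiv.Perm (Fin n)) :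
    PkSet (ins p π) =
      ((PkSet π).filter (fun q => q < (p : ℕ)) ∪
        (if (p : ℕ) < n then {(p : ℕ) + 1} else ∅)) ∪
      (((PkSet π).filter (fun q => (p : ℕ) + 2 ≤ q)).image (· + 1)) := by
  ext i
  rw [mem_PkSet_ins]
  simp only [mem_union, mem_filter, mem_image]
  constructor
  · rintro (⟨hc, hm⟩ | ⟨rfl, hcn⟩ | ⟨hc, hin, hm⟩)
    · exact Or.inl (Or.inl ⟨hm, hc⟩)
    · refine Or.inl (Or.inr ?_)
      rw [if_pos hcn]; exact mem_singleton_self _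
    · exact Or.inr ⟨i - 1, ⟨hm, by omega⟩, by omega⟩
  · rintro ((⟨hm, hc⟩ | hB) | ⟨q, ⟨hm, hq⟩, rfl⟩)
    · exact Or.inl ⟨hc, hm⟩
    · split_ifs at hB with hcn
      · simp only [mem_singleton] at hB
        exact Or.inr (Or.inl ⟨hB, hcn⟩)
      · simp at hB
    · have hb := mem_PkSet_bounds hm
      refine Or.inr (Or.inr ⟨by omega, by omega, by simpa using hm⟩)

lemma lpk_ins_card (p : Fin (n + 1)) (π : Equiv.Perm (Fin n)) :
    lpk (ins p π) + (if (p : ℕ) ∈ PkSet π ∨ (p : ℕ) + 1 ∈ PkSet π then 1 else 0) =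
      lpk π + (if (p : ℕ) < n then 1 else 0) := by
  have hBC : (if (p : ℕ) < n then ({(p : ℕ) + 1} : Finset ℕ) else ∅).card
      = if (p : ℕ) < n then 1 else 0 := by
    split_ifs <;> simp
  have hdAB : Disjoint ((PkSet π).filter (fun q => q < (p : ℕ)))
      (if (p : ℕ) < n then ({(p : ℕ) + 1} : Finset ℕ) else ∅) := by
    rw [disjoint_left]
    intro a ha hb
    rw [mem_filter] at ha
    split_ifs at hb with hc
    · simp only [mem_singleton] at hb; omega
    · simp at hb
  have hdABC : Disjoint
      ((PkSet π).filter (fun q => q < (p : ℕ)) ∪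
        (if (p : ℕ) < n then ({(p : ℕ) + 1} : Finset ℕ) else ∅))
      (((PkSet π).filter (fun q => (p : ℕ) + 2 ≤ q)).image (· + 1)) := by
    rw [disjoint_left]
    intro a ha hb
    simp only [mem_image, mem_filter] at hb
    obtain ⟨q, ⟨hqm, hq2⟩, rfl⟩ := hb
    rcases mem_union.mp ha with h | h
    · rw [mem_filter] at h; omega
    · split_ifs at h with hc
      · simp only [mem_singleton] at h; omega
      · simp at h
  have h1 : lpk (ins p π) =
      ((PkSet π).filter (fun q => q < (p : ℕ))).card
      + (if (p : ℕ) < n then 1 else 0)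
      + ((PkSet π).filter (fun q => (p : ℕ) + 2 ≤ q)).card := by
    rw [lpk_eq, PkSet_ins_eq, card_union_of_disjoint hdABC,
      card_union_of_disjoint hdAB,
      card_image_of_injOn (fun a _ b _ hab => by simpa using hab), hBC]
  have h2 : lpk π =
      ((PkSet π).filter (fun q => q < (p : ℕ))).card
      + ((PkSet π).filter (fun q => (p : ℕ) ≤ q ∧ q ≤ (p : ℕ) + 1)).card
      + ((PkSet π).filter (fun q => (p : ℕ) + 2 ≤ q)).card := by
    rw [lpk_eq]
    have hd1 : Disjoint ((PkSet π).filter (fun q => (p : ℕ) ≤ q ∧ q ≤ (p : ℕ) + 1))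
        ((PkSet π).filter (fun q => (p : ℕ) + 2 ≤ q)) := by
      rw [disjoint_left]; intro a ha hb
      rw [mem_filter] at ha hb; omega
    have hd2 : Disjoint ((PkSet π).filter (fun q => q < (p : ℕ)))
        ((PkSet π).filter (fun q => (p : ℕ) ≤ q ∧ q ≤ (p : ℕ) + 1) ∪
         (PkSet π).filter (fun q => (p : ℕ) + 2 ≤ q)) := by
      rw [disjoint_left]; intro a ha hb
      rw [mem_filter] at ha
      rcases mem_union.mp hb with h | h <;> (rw [mem_filter] at h; omega)
    have hsplit : PkSet π = (PkSet π).filter (fun q => q < (p : ℕ)) ∪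
        ((PkSet π).filter (fun q => (p : ℕ) ≤ q ∧ q ≤ (p : ℕ) + 1) ∪
         (PkSet π).filter (fun q => (p : ℕ) + 2 ≤ q)) := by
      ext q
      simp only [mem_union, mem_filter]
      constructor
      · intro hq
        rcases Nat.lt_or_ge q (p : ℕ) with h | h
        · exact Or.inl ⟨hq, h⟩
        · rcases Nat.lt_or_ge q ((p : ℕ) + 2) with h' | h'
          · exact Or.inr (Or.inl ⟨hq, h, by omega⟩)
          · exact Or.inr (Or.inr ⟨hq, h'⟩)
      · rintro (⟨hq, _⟩ | ⟨hq, _⟩ | ⟨hq, _⟩) <;> exact hq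
    conv_lhs => rw [hsplit]
    rw [card_union_of_disjoint hd2, card_union_of_disjoint hd1]
    ring
  have h3 : ((PkSet π).filter (fun q => (p : ℕ) ≤ q ∧ q ≤ (p : ℕ) + 1)).card
      = if (p : ℕ) ∈ PkSet π ∨ (p : ℕ) + 1 ∈ PkSet π then 1 else 0 := by
    by_cases hp0 : (p : ℕ) ∈ PkSet π
    · by_cases hp1 : (p : ℕ) + 1 ∈ PkSet π
      · exact absurd hp1 (nonadj hp0)
      · rw [if_pos (Or.inl hp0)]
        have he : (PkSet π).filter (fun q => (p : ℕ) ≤ q ∧ q ≤ (p : ℕ) + 1)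
            = {(p : ℕ)} := by
          ext q
          simp only [mem_filter, mem_singleton]
          constructor
          · rintro ⟨hq, h1, h2⟩
            by_contra hne
            have : q = (p : ℕ) + 1 := by omega
            exact hp1 (this ▸ hq)
          · rintro rfl; exact ⟨hp0, le_refl _, by omega⟩
        rw [he, card_singleton]
    · by_cases hp1 : (p : ℕ) + 1 ∈ PkSet π
      · rw [if_pos (Or.inr hp1)]
        have he : (PkSet π).filter (fun q => (p : ℕ) ≤ q ∧ q ≤ (p : ℕ) + 1)
            = {(p : ℕ) + 1} := by
          ext q
          simp only [mem_filter, mem_singleton]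
          constructor
          · rintro ⟨hq, h1, h2⟩
            by_contra hne
            have : q = (p : ℕ) := by omega
            exact hp0 (this ▸ hq)
          · rintro rfl; exact ⟨hp1, by omega, le_refl _⟩
        rw [he, card_singleton]
      · rw [if_neg (by tauto)]
        have he : (PkSet π).filter (fun q => (p : ℕ) ≤ q ∧ q ≤ (p : ℕ) + 1)
            = ∅ := by
          rw [eq_empty_iff_forall_notMem]
          rintro q hq
          rw [mem_filter] at hq
          obtain ⟨hq, h1, h2⟩ := hq
          rcases Nat.eq_or_lt_of_le h1 with h | h
          · exact hp0 (h ▸ hq)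
          · have : q = (p : ℕ) + 1 := by omega
            exact hp1 (this ▸ hq)
        rw [he, card_empty]
    
  rw [h1, h2, h3]
  omega

lemma lpk_ins (p : Fin (n + 1)) (π : Equiv.Perm (Fin n)) :
    lpk (ins p π) = if (p : ℕ) = n ∨ (p : ℕ) ∈ PkSet π ∨ (p : ℕ) + 1 ∈ PkSet π
      then lpk π else lpk π + 1 := by
  have h := lpk_ins_card p π
  have hp := p.isLt
  split_ifs with hg
  · rcases hg with h1 | h2 | h3
    · have hnot : ¬((p : ℕ) ∈ PkSet π ∨ (p : ℕ) + 1 ∈ PkSet π) := by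
        rintro (hh | hh) <;> (have := mem_PkSet_bounds hh; omega)
      rw [if_neg hnot, if_neg (by omega)] at h
      omega
    · have hb := mem_PkSet_bounds h2
      rw [if_pos (Or.inl h2), if_pos (by omega)] at h
      omega
    · have hb := mem_PkSet_bounds h3
      rw [if_pos (Or.inr h3), if_pos (by omega)] at h
      omega
  · push_neg at hg
    rw [if_neg (by tauto), if_pos (by omega)] at h
    omega

end Pf
namespace Pf
open Finset
variable {n : ℕ}

lemma Gn_card (π : Equiv.Perm (Fin n)) :
    ((Finset.range (n + 1)).filter
        (fun P => P = n ∨ P ∈ PkSet π ∨ P + 1 ∈ PkSet π)).card = 2 * lpk π + 1 := by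
  have he : (Finset.range (n + 1)).filter
      (fun P => P = n ∨ P ∈ PkSet π ∨ P + 1 ∈ PkSet π)
      = insert n ((PkSet π) ∪ (PkSet π).image (· - 1)) := by
    ext x
    simp only [mem_filter, mem_range, mem_insert, mem_union, mem_image]
    constructor
    · rintro ⟨hx, h | h | h⟩
      · exact Or.inl h
      · exact Or.inr (Or.inl h)
      · exact Or.inr (Or.inr ⟨x + 1, h, by omega⟩)
    · rintro (rfl | h | ⟨q, hq, rfl⟩)
      · exact ⟨by omega, Or.inl rfl⟩
      · have := mem_PkSet_bounds h
        exact ⟨by omega, Or.inr (Or.inl h)⟩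
      · have hb := mem_PkSet_bounds hq
        refine ⟨by omega, Or.inr (Or.inr ?_)⟩
        have : q - 1 + 1 = q := by omega
        rw [this]; exact hq
  rw [he]
  have hd : Disjoint (PkSet π) ((PkSet π).image (· - 1)) := by
    rw [disjoint_left]
    intro a ha hb
    simp only [mem_image] at hb
    obtain ⟨q, hq, hq2⟩ := hb
    have hbq := mem_PkSet_bounds hq
    have : q = a + 1 := by omega
    exact nonadj ha (this ▸ hq)
  have hn : n ∉ (PkSet π) ∪ (PkSet π).image (· - 1) := by
    intro h
    rcases mem_union.mp h with h | h
    · have := mem_PkSet_bounds h; omega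
    · simp only [mem_image] at h
      obtain ⟨q, hq, hq2⟩ := h
      have := mem_PkSet_bounds hq; omega
  rw [card_insert_of_notMem hn, card_union_of_disjoint hd,
    card_image_of_injOn (fun a ha b hb hab => by
      have := mem_PkSet_bounds ha; have := mem_PkSet_bounds hb
      omega), lpk_eq]
  ring

lemma G_card (π : Equiv.Perm (Fin n)) :
    ((univ : Finset (Fin (n + 1))).filter
        (fun (p : Fin (n + 1)) => (p : ℕ) = n ∨ (p : ℕ) ∈ PkSet π ∨ (p : ℕ) + 1 ∈ PkSet π)).card
      = 2 * lpk π + 1 := by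
  have himg : ((univ : Finset (Fin (n + 1))).filter
      (fun (p : Fin (n + 1)) => (p : ℕ) = n ∨ (p : ℕ) ∈ PkSet π ∨ (p : ℕ) + 1 ∈ PkSet π)).image
        (fun (a : Fin (n + 1)) => (a : ℕ))
      = (Finset.range (n + 1)).filter
        (fun P => P = n ∨ P ∈ PkSet π ∨ P + 1 ∈ PkSet π) := by
    ext x
    simp only [mem_image, mem_filter, mem_range, mem_univ, true_and]
    constructor
    · rintro ⟨a, ha, rfl⟩
      exact ⟨a.isLt, ha⟩
    · rintro ⟨hx, h⟩
      exact ⟨⟨x, hx⟩, h, rfl⟩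
  calc ((univ : Finset (Fin (n + 1))).filter
      (fun (p : Fin (n + 1)) => (p : ℕ) = n ∨ (p : ℕ) ∈ PkSet π ∨ (p : ℕ) + 1 ∈ PkSet π)).card
      = (((univ : Finset (Fin (n + 1))).filter
      (fun (p : Fin (n + 1)) => (p : ℕ) = n ∨ (p : ℕ) ∈ PkSet π ∨ (p : ℕ) + 1 ∈ PkSet π)).image
        (fun (a : Fin (n + 1)) => (a : ℕ))).card :=
        (Finset.card_image_of_injective _ Fin.val_injective).symm
    _ = 2 * lpk π + 1 := by rw [himg]; exact Gn_card π

lemma sum_ite_const {α : Type*} [Fintype α] (P : α → Prop) [DecidablePred P] (c : ℕ) :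
    (∑ a : α, if P a then c else 0) = c * ((univ : Finset α).filter P).card := by
  rw [← Finset.sum_filter, Finset.sum_const, smul_eq_mul, mul_comm]

lemma sum_p (π : Equiv.Perm (Fin n)) (j : ℕ) :
    (∑ p : Fin (n + 1), if lpk (ins p π) = j then 1 else 0) =
      (if lpk π = j then 2 * j + 1 else 0)
      + (if lpk π + 1 = j then n - 2 * lpk π else 0) := by
  rw [← Finset.sum_filter_add_sum_filter_not univ
    (fun p : Fin (n + 1) => (p : ℕ) = n ∨ (p : ℕ) ∈ PkSet π ∨ (p : ℕ) + 1 ∈ PkSet π)]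
  have h1 : ∀ p ∈ univ.filter
      (fun p : Fin (n + 1) => (p : ℕ) = n ∨ (p : ℕ) ∈ PkSet π ∨ (p : ℕ) + 1 ∈ PkSet π),
      (if lpk (ins p π) = j then (1 : ℕ) else 0) = (if lpk π = j then 1 else 0) := by
    intro p hp
    rw [lpk_ins, if_pos (mem_filter.mp hp).2]
  have h2 : ∀ p ∈ univ.filter
      (fun p : Fin (n + 1) => ¬((p : ℕ) = n ∨ (p : ℕ) ∈ PkSet π ∨ (p : ℕ) + 1 ∈ PkSet π)),
      (if lpk (ins p π) = j then (1 : ℕ) else 0) = (if lpk π + 1 = j then 1 else 0) := by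
    intro p hp
    rw [lpk_ins, if_neg (mem_filter.mp hp).2]
  rw [Finset.sum_congr rfl h1, Finset.sum_congr rfl h2, Finset.sum_const,
    Finset.sum_const]
  have hcard : (univ.filter
      (fun p : Fin (n + 1) => (p : ℕ) = n ∨ (p : ℕ) ∈ PkSet π ∨ (p : ℕ) + 1 ∈ PkSet π)).card
      = 2 * lpk π + 1 := G_card π
  have hcard2 : (univ.filter
      (fun p : Fin (n + 1) => ¬((p : ℕ) = n ∨ (p : ℕ) ∈ PkSet π ∨ (p : ℕ) + 1 ∈ PkSet π))).card
      = n - 2 * lpk π := by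
    have htot := Finset.card_filter_add_card_filter_not (s := (univ : Finset (Fin (n + 1))))
      (p := fun p : Fin (n + 1) => (p : ℕ) = n ∨ (p : ℕ) ∈ PkSet π ∨ (p : ℕ) + 1 ∈ PkSet π)
    rw [hcard] at htot
    simp only [Finset.card_univ, Fintype.card_fin] at htot
    omega
  rw [hcard, hcard2, smul_eq_mul, smul_eq_mul]
  split_ifs <;> omega

lemma M_succ_eq (j : ℕ) :
    M (n + 1) j = ∑ π : Equiv.Perm (Fin n),
      ((if lpk π = j then 2 * j + 1 else 0)
        + (if lpk π + 1 = j then n - 2 * lpk π else 0)) := by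
  classical
  rw [M, Finset.card_filter]
  rw [← Fintype.sum_bijective _ ins_bijective _
      (fun σ => if lpk σ = j then (1 : ℕ) else 0) (fun _ => rfl)]
  rw [Fintype.sum_prod_type, Finset.sum_comm]
  exact Finset.sum_congr rfl (fun π _ => sum_p π j)

lemma M_zero_succ : M (n + 1) 0 = M n 0 := by
  rw [M_succ_eq]
  have : ∀ π : Equiv.Perm (Fin n),
      ((if lpk π = 0 then 2 * 0 + 1 else 0)
        + (if lpk π + 1 = 0 then n - 2 * lpk π else 0))
      = (if lpk π = 0 then 1 else 0) := by
    intro π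
    split_ifs <;> simp_all
  rw [Finset.sum_congr rfl (fun π _ => this π), sum_ite_const]
  rw [M, one_mul]

lemma M_succ_succ (k : ℕ) :
    M (n + 1) (k + 1) = (2 * k + 3) * M n (k + 1) + (n - 2 * k) * M n k := by
  rw [M_succ_eq]
  have : ∀ π : Equiv.Perm (Fin n),
      ((if lpk π = k + 1 then 2 * (k + 1) + 1 else 0)
        + (if lpk π + 1 = k + 1 then n - 2 * lpk π else 0))
      = ((if lpk π = k + 1 then 2 * k + 3 else 0)
        + (if lpk π = k then n - 2 * k else 0)) := by
    intro π
    split_ifs <;> omega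
  rw [Finset.sum_congr rfl (fun π _ => this π), Finset.sum_add_distrib,
    sum_ite_const, sum_ite_const]
  rfl

lemma M_half_pos : ∀ n, 0 < M n (n / 2) := by
  intro n
  induction n with
  | zero =>
      apply Finset.card_pos.mpr
      exact ⟨1, mem_filter.mpr ⟨mem_univ _, by have := lpk_le (1 : Equiv.Perm (Fin 0)); omega⟩⟩
  | succ n ih =>
      rcases Nat.eq_zero_or_pos n with rfl | hn
      · rw [(show (0 + 1) / 2 = 0 from rfl), M_zero_succ]
        exact ih
      · rcases Nat.even_or_odd n with he | ho
        · have hmod : n % 2 = 0 := Nat.even_iff.mp he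
          obtain ⟨k, hk⟩ : ∃ k, n / 2 = k + 1 := ⟨n / 2 - 1, by omega⟩
          have h2 : (n + 1) / 2 = k + 1 := by omega
          rw [h2, M_succ_succ]
          rw [hk] at ih
          have := Nat.mul_pos (show 0 < 2 * k + 3 by omega) ih
          omega
        · have hmod : n % 2 = 1 := Nat.odd_iff.mp ho
          have h2 : (n + 1) / 2 = n / 2 + 1 := by omega
          have h3 : n - 2 * (n / 2) = 1 := by omega
          rw [h2, M_succ_succ, h3]
          have : 1 * M n (n / 2) = M n (n / 2) := one_mul _
          omega

end Pf
namespace Pf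
open Finset
variable {n : ℕ}

lemma M_eq_zero {m k : ℕ} (h : m / 2 < k) : M m k = 0 := by
  rw [M, Finset.card_eq_zero, Finset.filter_eq_empty_iff]
  intro π _
  have := lpk_le π
  omega

lemma M_zero_zero : M 0 0 = 1 := by
  rw [M, Finset.filter_true_of_mem (fun π _ => by have := lpk_le π; omega)]
  simp [Finset.card_univ]

def S (m i : ℕ) : ℤ :=
  ∑ k ∈ Finset.range (m + 2), (M m k : ℤ) * (k.choose i) * 2 ^ (k - i)

lemma xi_neg : ∀ m : ℕ, ∀ i : ℤ, i < 0 → xi m i = 0 := by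
  intro m
  induction m with
  | zero => intro i hi; rw [xi, if_neg (by omega)]
  | succ m ih =>
      intro i hi
      rw [xi, ih i hi, ih (i - 1) (by omega)]
      rcases eq_or_lt_of_le (show i ≤ -1 by omega) with h | h
      · subst h
        norm_num
      · rw [ih (i + 1) (by omega)]
        ring

lemma key_id0 (nn k : ℕ) :
    (2 * (k : ℤ) + 1) * (k.choose 0) * 2 ^ k
      + ((nn : ℤ) - 2 * k) * ((k + 1).choose 0) * 2 ^ (k + 1)
    = (1 + 2 * (nn : ℤ)) * (k.choose 0) * 2 ^ k
      - 4 * (k.choose 1) * 2 ^ (k - 1) := by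
  rcases Nat.eq_zero_or_pos k with rfl | hk
  · norm_num [mul_comm]
  · obtain ⟨k', rfl⟩ : ∃ k', k = k' + 1 := ⟨k - 1, by omega⟩
    rw [Nat.choose_zero_right, Nat.choose_zero_right, Nat.choose_one_right]
    rw [(show k' + 1 - 1 = k' by omega)]
    rw [pow_succ, (show k' + 1 + 1 = k' + 1 + 1 by rfl), pow_succ, pow_succ]
    push_cast
    ring

lemma key_id (nn k i : ℕ) :
    (2 * (k : ℤ) + 1) * (k.choose (i + 1)) * 2 ^ (k - (i + 1))
      + ((nn : ℤ) - 2 * k) * ((k + 1).choose (i + 1)) * 2 ^ (k - i)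
    = (1 + 2 * (nn : ℤ) - 6 * ((i : ℤ) + 1)) * (k.choose (i + 1)) * 2 ^ (k - (i + 1))
      + ((nn : ℤ) - 2 * ((i : ℤ) + 1) + 2) * (k.choose i) * 2 ^ (k - i)
      - 4 * ((i : ℤ) + 2) * (k.choose (i + 2)) * 2 ^ (k - (i + 2)) := by
  rcases Nat.lt_or_ge k i with hk | hk
  · rw [Nat.choose_eq_zero_of_lt (by omega), Nat.choose_eq_zero_of_lt (by omega),
      Nat.choose_eq_zero_of_lt (by omega), Nat.choose_eq_zero_of_lt (by omega)]
    push_cast; ring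
  · rcases Nat.lt_or_ge k (i + 1) with hk1 | hk1
    · -- k = i
      have hki : k = i := by omega
      subst hki
      rw [Nat.choose_eq_zero_of_lt (by omega), Nat.choose_self,
        Nat.choose_self, Nat.choose_eq_zero_of_lt (by omega)]
      rw [Nat.sub_eq_zero_of_le (by omega), Nat.sub_eq_zero_of_le (by omega),
        Nat.sub_eq_zero_of_le (by omega)]
      push_cast; ring
    · rcases Nat.lt_or_ge k (i + 2) with hk2 | hk2
      · -- k = i + 1
        have hki : k = i + 1 := by omega
        subst hki
        rw [Nat.choose_self, Nat.choose_succ_self_right, Nat.choose_succ_self_right,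
          Nat.choose_eq_zero_of_lt (by omega)]
        rw [(show i + 1 - i = 1 by omega), Nat.sub_eq_zero_of_le (by omega)]
        push_cast; ring
      · -- k ≥ i + 2
        obtain ⟨m, rfl⟩ : ∃ m, k = m + (i + 2) := ⟨k - (i + 2), by omega⟩
        have r1 := Nat.choose_succ_right_eq (m + (i + 2)) i
        have r2 := Nat.choose_succ_right_eq (m + (i + 2)) (i + 1)
        have r3 := Nat.choose_succ_succ (m + (i + 2)) i
        have r1c : ((m + (i + 2)).choose (i + 1) : ℤ) * (i + 1)
            = ((m + (i + 2)).choose i) * (((m : ℤ) + (i + 2)) - i) := by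
          have h := congrArg (fun x : ℕ => (x : ℤ)) r1
          simp only [Nat.cast_mul] at h
          rw [Nat.cast_sub (by omega)] at h
          push_cast at h ⊢
          linarith
        have r2c : ((m + (i + 2)).choose (i + 2) : ℤ) * (i + 2)
            = ((m + (i + 2)).choose (i + 1)) * (((m : ℤ) + (i + 2)) - (i + 1)) := by
          have h := congrArg (fun x : ℕ => (x : ℤ)) r2
          simp only [Nat.cast_mul] at h
          rw [Nat.cast_sub (by omega)] at h
          push_cast at h ⊢
          linarith
        have r3c : ((m + (i + 2) + 1).choose (i + 1) : ℤ)
            = ((m + (i + 2)).choose i) + ((m + (i + 2)).choose (i + 1)) := by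
          exact_mod_cast congrArg (fun x : ℕ => (x : ℤ)) r3
        rw [(show m + (i + 2) - (i + 1) = m + 1 by omega),
          (show m + (i + 2) - i = m + 2 by omega),
          (show m + (i + 2) - (i + 2) = m by omega)]
        rw [(show m + 2 = m + 1 + 1 by rfl), pow_succ, pow_succ]
        push_cast
        linear_combination (((nn : ℤ) - 2 * ((m : ℤ) + (i + 2))) * 4 * (2:ℤ)^m) * r3c
          + (8 * (2:ℤ)^m) * r1c + (4 * (2:ℤ)^m) * r2c

end Pf
namespace Pf
open Finset
variable {n : ℕ}

lemma M_ne_zero_le {m k : ℕ} (h : M m k ≠ 0) : 2 * k ≤ m := by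
  by_contra h'
  exact h (M_eq_zero (by omega))

lemma S_succ_expand (m i : ℕ) :
    S (m + 1) i
      = (∑ k ∈ Finset.range (m + 2), (2 * (k : ℤ) + 1) * (M m k) * (k.choose i) * 2 ^ (k - i))
      + (∑ k ∈ Finset.range (m + 2),
          ((m : ℤ) - 2 * k) * (M m k) * ((k + 1).choose i) * 2 ^ (k + 1 - i)) := by
  rw [S, (show m + 1 + 2 = m + 2 + 1 from rfl), Finset.sum_range_succ']
  have e1 : ∀ k ∈ Finset.range (m + 2),
      (M (m + 1) (k + 1) : ℤ) * ((k + 1).choose i) * 2 ^ (k + 1 - i)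
      = (2 * ((k : ℤ) + 1) + 1) * (M m (k + 1)) * ((k + 1).choose i) * 2 ^ (k + 1 - i)
        + ((m - 2 * k : ℕ) : ℤ) * (M m k) * ((k + 1).choose i) * 2 ^ (k + 1 - i) := by
    intro k _
    rw [M_succ_succ]
    push_cast
    ring
  rw [Finset.sum_congr rfl e1, Finset.sum_add_distrib]
  have hfirst : (∑ k ∈ Finset.range (m + 2), ((2 * ((k : ℤ) + 1) + 1) * (M m (k + 1))
        * ((k + 1).choose i) * 2 ^ (k + 1 - i)))
      + (M (m + 1) 0 : ℤ) * ((0 : ℕ).choose i) * 2 ^ (0 - i)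
      = ∑ k ∈ Finset.range (m + 2), (2 * (k : ℤ) + 1) * (M m k) * (k.choose i) * 2 ^ (k - i) := by
    have e2 : (M (m + 1) 0 : ℤ) * ((0 : ℕ).choose i) * 2 ^ (0 - i)
        = (fun k : ℕ => (2 * (k : ℤ) + 1) * (M m k) * (k.choose i) * 2 ^ (k - i)) 0 := by
      simp only [M_zero_succ]; push_cast; ring
    have e4 : (∑ k ∈ Finset.range (m + 2), ((2 * ((k : ℤ) + 1) + 1) * (M m (k + 1))
          * ((k + 1).choose i) * 2 ^ (k + 1 - i)))
        = ∑ k ∈ Finset.range (m + 2),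
            (fun k : ℕ => (2 * (k : ℤ) + 1) * (M m k) * (k.choose i) * 2 ^ (k - i)) (k + 1) :=
      Finset.sum_congr rfl (fun k _ => by push_cast; ring)
    rw [e2, e4, ← Finset.sum_range_succ'
      (fun k => (2 * (k : ℤ) + 1) * (M m k) * (k.choose i) * 2 ^ (k - i)) (m + 2)]
    rw [Finset.sum_range_succ]
    rw [M_eq_zero (show m / 2 < m + 2 by omega)]
    push_cast
    ring
  have hsecond : (∑ k ∈ Finset.range (m + 2),
        ((m - 2 * k : ℕ) : ℤ) * (M m k) * ((k + 1).choose i) * 2 ^ (k + 1 - i))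
      = ∑ k ∈ Finset.range (m + 2),
          ((m : ℤ) - 2 * k) * (M m k) * ((k + 1).choose i) * 2 ^ (k + 1 - i) := by
    apply Finset.sum_congr rfl
    intro k _
    by_cases h : M m k = 0
    · rw [h]; push_cast; ring
    · have h2 : 2 * k ≤ m := M_ne_zero_le h
      rw [Nat.cast_sub (by omega)]
      push_cast; ring
  linarith [hfirst, hsecond]

lemma xi_eq_S : ∀ m : ℕ, ∀ i : ℕ, xi m (i : ℤ) = S m i := by
  intro m
  induction m with
  | zero =>
      intro i
      rw [S, Finset.sum_range_succ, Finset.sum_range_succ, Finset.sum_range_zero,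
        M_zero_zero, M_eq_zero (show 0 / 2 < 1 by norm_num)]
      rcases Nat.eq_zero_or_pos i with rfl | hi
      · rw [xi, if_pos (by norm_num)]
        norm_num
      · rw [xi, if_neg (by exact_mod_cast hi.ne')]
        rw [Nat.choose_eq_zero_of_lt (by omega)]
        push_cast
        ring
  | succ m ih =>
      intro i
      rcases Nat.eq_zero_or_pos i with rfl | hi
      · rw [xi]
        simp only [Nat.cast_zero]
        rw [(show (0 : ℤ) - 1 = -1 by ring), xi_neg m (-1) (by norm_num)]
        rw [(show (0 : ℤ) + 1 = ((1 : ℕ) : ℤ) by norm_num)]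
        have ih0 := ih 0
        have ih1 := ih 1
        rw [(show ((0 : ℕ) : ℤ) = (0 : ℤ) by norm_num)] at ih0
        rw [ih0, ih1]
        rw [S_succ_expand m 0]
        rw [S, S, Finset.mul_sum, Finset.mul_sum]
        rw [(show ((m : ℤ) - 2 * 0 + 2) * 0 = 0 by ring), add_zero]
        rw [← Finset.sum_sub_distrib, ← Finset.sum_add_distrib]
        apply Finset.sum_congr rfl
        intro k hk
        simp only [Nat.sub_zero]
        push_cast
        linear_combination (-(M m k : ℤ)) * key_id0 m k
      · obtain ⟨i', rfl⟩ : ∃ i', i = i' + 1 := ⟨i - 1, by omega⟩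
        rw [xi]
        have c1 : ((i' + 1 : ℕ) : ℤ) - 1 = ((i' : ℕ) : ℤ) := by push_cast; ring
        have c2 : ((i' + 1 : ℕ) : ℤ) + 1 = ((i' + 2 : ℕ) : ℤ) := by push_cast; ring
        rw [c1, c2, ih i', ih (i' + 1), ih (i' + 2)]
        rw [S_succ_expand m (i' + 1), ← Finset.sum_add_distrib]
        rw [S, S, S, Finset.mul_sum, Finset.mul_sum, Finset.mul_sum,
          ← Finset.sum_add_distrib, ← Finset.sum_sub_distrib]
        apply Finset.sum_congr rfl
        intro k hk
        have e : k + 1 - (i' + 1) = k - i' := by omega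
        rw [e]
        push_cast
        linear_combination (-(M m k : ℤ)) * key_id m k i'

end Pf
namespace Pf
open Finset
variable {n : ℕ}

lemma S_eq_zero {m i : ℕ} (h : m / 2 < i) : S m i = 0 := by
  rw [S]
  apply Finset.sum_eq_zero
  intro k hk
  by_cases hM : M m k = 0
  · rw [hM]; push_cast; ring
  · have := M_ne_zero_le hM
    rw [Nat.choose_eq_zero_of_lt (by omega)]
    push_cast; ring

lemma binom_sum (x : ℝ) (k N : ℕ) (hk : k < N) :
    ∑ i ∈ Finset.range N, (k.choose i : ℝ) * 2 ^ (k - i) * (x - 2) ^ i = x ^ k := by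
  have hsub : Finset.range (k + 1) ⊆ Finset.range N := Finset.range_subset_range.mpr (by omega)
  have hzero : ∀ i ∈ Finset.range N, i ∉ Finset.range (k + 1) →
      (k.choose i : ℝ) * 2 ^ (k - i) * (x - 2) ^ i = 0 := by
    intro i _ hi
    rw [Finset.mem_range, not_lt] at hi
    rw [Nat.choose_eq_zero_of_lt (by omega)]
    push_cast; ring
  have h2 : ((x - 2) + 2 : ℝ) ^ k
      = ∑ i ∈ Finset.range (k + 1), (x - 2) ^ i * 2 ^ (k - i) * (k.choose i) :=
    add_pow _ _ _
  calc ∑ i ∈ Finset.range N, (k.choose i : ℝ) * 2 ^ (k - i) * (x - 2) ^ i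
      = ∑ i ∈ Finset.range (k + 1), (k.choose i : ℝ) * 2 ^ (k - i) * (x - 2) ^ i :=
        (Finset.sum_subset hsub hzero).symm
    _ = ((x - 2) + 2 : ℝ) ^ k := by
        rw [h2]; exact Finset.sum_congr rfl (fun i _ => by ring)
    _ = x ^ k := by ring

lemma part1 (n : ℕ) (x : ℝ) :
    xiPoly n (x - 2) = ∑ π : Equiv.Perm (Fin n), x ^ lpk π := by
  have hA : (∑ π : Equiv.Perm (Fin n), x ^ lpk π)
      = ∑ k ∈ Finset.range (n + 2), (M n k : ℝ) * x ^ k := by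
    have hmaps : ∀ π : Equiv.Perm (Fin n), π ∈ (Finset.univ : Finset (Equiv.Perm (Fin n))) →
        lpk π ∈ Finset.range (n + 2) :=
      fun π _ => Finset.mem_range.mpr (by have := lpk_le π; omega)
    rw [← Finset.sum_fiberwise_of_maps_to hmaps (fun π => x ^ lpk π)]
    apply Finset.sum_congr rfl
    intro k _
    rw [Finset.sum_congr rfl (fun π hπ => by rw [(Finset.mem_filter.mp hπ).2])]
    rw [Finset.sum_const, nsmul_eq_mul]
    rfl
  have hB : xiPoly n (x - 2)
      = ∑ i ∈ Finset.range (n + 2), ((S n i : ℤ) : ℝ) * (x - 2) ^ i := by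
    rw [xiPoly]
    rw [Finset.sum_congr rfl (fun i (_ : i ∈ Finset.range (n / 2 + 1)) => by
      rw [xi_eq_S] :
      ∀ i ∈ Finset.range (n / 2 + 1), ((xi n i : ℝ)) * (x - 2) ^ i
        = ((S n i : ℤ) : ℝ) * (x - 2) ^ i)]
    apply Finset.sum_subset (Finset.range_subset_range.mpr (by omega))
    intro i _ hi
    rw [Finset.mem_range, not_lt] at hi
    rw [S_eq_zero (by omega)]
    push_cast; ring
  rw [hB, hA]
  have hcast : ∀ i : ℕ, ((S n i : ℤ) : ℝ)
      = ∑ k ∈ Finset.range (n + 2), (M n k : ℝ) * (k.choose i) * 2 ^ (k - i) := by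
    intro i
    rw [S]
    push_cast
    rfl
  rw [Finset.sum_congr rfl (fun i _ => by rw [hcast i] :
    ∀ i ∈ Finset.range (n + 2), ((S n i : ℤ) : ℝ) * (x - 2) ^ i
      = (∑ k ∈ Finset.range (n + 2), (M n k : ℝ) * (k.choose i) * 2 ^ (k - i)) * (x - 2) ^ i)]
  rw [Finset.sum_congr rfl (fun i (_ : i ∈ Finset.range (n + 2)) => Finset.sum_mul _ _ _ :
    ∀ i ∈ Finset.range (n + 2),
      (∑ k ∈ Finset.range (n + 2), (M n k : ℝ) * (k.choose i) * 2 ^ (k - i)) * (x - 2) ^ i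
      = ∑ k ∈ Finset.range (n + 2), (M n k : ℝ) * (k.choose i) * 2 ^ (k - i) * (x - 2) ^ i)]
  rw [Finset.sum_comm]
  apply Finset.sum_congr rfl
  intro k hk
  rw [Finset.mem_range] at hk
  have : ∀ i ∈ Finset.range (n + 2),
      (M n k : ℝ) * (k.choose i) * 2 ^ (k - i) * (x - 2) ^ i
      = (M n k : ℝ) * ((k.choose i : ℝ) * 2 ^ (k - i) * (x - 2) ^ i) := by
    intro i _; ring
  rw [Finset.sum_congr rfl this, ← Finset.mul_sum, binom_sum x k (n + 2) (by omega)]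

lemma part2 (n i : ℕ) (h : i ≤ n / 2) : 0 < xi n i := by
  rw [xi_eq_S, S]
  apply Finset.sum_pos'
  · intro k _
    positivity
  · refine ⟨n / 2, Finset.mem_range.mpr (by omega), ?_⟩
    apply mul_pos (mul_pos ?_ ?_) (by positivity)
    · exact_mod_cast M_half_pos n
    · exact_mod_cast Nat.choose_pos h

end Pf

/-- `ξ_n(x-2) = Σ_{π ∈ S_n} x^{lpk(π)}`, and each `ξ_{n,i}` with
`0 ≤ i ≤ ⌊n/2⌋` is a positive integer. -/
theorem stmt12 :
    (∀ (n : ℕ) (x : ℝ), xiPoly n (x - 2) = ∑ π : Equiv.Perm (Fin n), x ^ lpk π) ∧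
    (∀ (n : ℕ) (i : ℕ), i ≤ n / 2 → 0 < xi n i) := by
  exact ⟨Pf.part1, Pf.part2⟩
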